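/- For fixed a, b in Fin m with m ≥ 1, the sum over c in Fin m of μ(a,c)·μ(c,b) equals m·δ_{a,0}·δ_{b,0} + (1 - δ_{a,0})·(1 - δ_{b,0})·(1 + δ_{a,b}). -/
import Mathlib


def wronMu {m : ℕ} [NeZero m] (x y : Fin m) : ℤ :=
  if x = 0 ∨ y = 0 then 1 else if x = y then -1 else 0

def kdel {m : ℕ} (x y : Fin m) : ℤ := if x = y then 1 else 0

theorem sum_mu_sq {m : ℕ} [NeZero m] (a b : Fin m) :
    ∑ c : Fin m, wronMu a c * wronMu c b =
      (m : ℤ) * kdel a 0 * kdel b 0 +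
        (1 - kdel a 0) * (1 - kdel b 0) * (1 + kdel a b) := by
  unfold wronMu kdel
  by_cases ha : a = 0 <;> by_cases hb : b = 0
  · subst ha; subst hb; simp
  · subst ha
    have : ∀ c : Fin m, (if (0 : Fin m) = 0 ∨ c = 0 then (1:ℤ) else if 0 = c then -1 else 0)
        * (if c = 0 ∨ b = 0 then 1 else if c = b then -1 else 0)
        = (if c = 0 then 1 else 0) + (if c = b then -1 else 0) := by
      intro c
      by_cases h1 : c = 0 <;> by_cases h2 : c = b <;> simp_all
    rw [Finset.sum_congr rfl fun c _ => this c, Finset.sum_add_distrib]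
    simp [hb]
  · subst hb
    have : ∀ c : Fin m, (if a = 0 ∨ c = 0 then (1:ℤ) else if a = c then -1 else 0)
        * (if c = 0 ∨ (0:Fin m) = 0 then 1 else if c = 0 then -1 else 0)
        = (if c = 0 then 1 else 0) + (if c = a then -1 else 0) := by
      intro c
      by_cases h1 : c = 0 <;> by_cases h2 : c = a <;> simp_all [eq_comm]
    rw [Finset.sum_congr rfl fun c _ => this c, Finset.sum_add_distrib]
    simp [ha]
  · by_cases hab : a = b
    · subst hab
      have : ∀ c : Fin m, (if a = 0 ∨ c = 0 then (1:ℤ) else if a = c then -1 else 0)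
          * (if c = 0 ∨ a = 0 then 1 else if c = a then -1 else 0)
          = (if c = 0 then 1 else 0) + (if c = a then 1 else 0) := by
        intro c
        by_cases h1 : c = 0 <;> by_cases h2 : c = a <;> simp_all [eq_comm]
      rw [Finset.sum_congr rfl fun c _ => this c, Finset.sum_add_distrib]
      simp [ha]
    · have : ∀ c : Fin m, (if a = 0 ∨ c = 0 then (1:ℤ) else if a = c then -1 else 0)
          * (if c = 0 ∨ b = 0 then 1 else if c = b then -1 else 0)
          = (if c = 0 then 1 else 0) := by
        intro c
        by_cases h1 : c = 0 <;> by_cases h2 : c = a <;> by_cases h3 : c = b <;>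
          simp_all [eq_comm]
      rw [Finset.sum_congr rfl fun c _ => this c]
      simp [ha, hb, hab]
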